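/- Consider the two-item all-pay auction with B_1 ≠ B_2, let s be the player with the larger budget and w the other, and set L_j = min{B_1, B_2, v_{1j}, v_{2j}}. Assume v_{s1} > L_1 and v_{s2} = L_2. Define T_2 = L_2 − (L_1/v_{w1})·v_{w2} and T_4 = L_2 − ((v_{s1} − L_1)/v_{s1})·v_{s2}, and additionally assume T_2 ≥ 0, T_4 ≥ 0, and L_1 + T_2 ≤ B_s. Then the following profile is a Nash equilibrium: player s's strategy is the mixture that places an atom of mass 1 − L_2/v_{w2} at the point (L_1, 0); with probability T_2/v_{w2}, is uniform on the segment {(L_1, t) : t ∈ (0, T_2]}; and with probability L_1/v_{w1}, is uniform on the segment joining (0, L_2) to (L_1, T_2). Player w's strategy is the mixture that, with probability (L_2 − T_4)/v_{s2}, is uniform on the segment {(0, t) : t ∈ [T_4, L_2]}; and with probability L_1/v_{s1}, is uniform on the segment joining (0, T_4) to (L_1, 0). -/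

import Mathlib

open MeasureTheory Set

noncomputable section

/-- `L_j = min {B₁, B₂, v_{1j}, v_{2j}}` for item `j` of the two-item auction. -/
def Lval2 (B : Fin 2 → ℝ) (v : Fin 2 → Fin 2 → ℝ) (j : Fin 2) : ℝ :=
  min (min (B 0) (B 1)) (min (v 0 j) (v 1 j))

/-- Probability that player `i` wins item `j` when bidding `xi` on it while the
opponent bids `xo`: the strictly higher bid wins; on a tie at `L_j` the player with
the strictly larger `min {Bᵢ, v_{ij}}` wins, and all other ties are fair coins. -/
def winProb2 (B : Fin 2 → ℝ) (v : Fin 2 → Fin 2 → ℝ) (i j : Fin 2) (xi xo : ℝ) : ℝ :=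
  if xo < xi then 1
  else if xi < xo then 0
  else if xi = Lval2 B v j ∧ min (B (1 - i)) (v (1 - i) j) < min (B i) (v i j) then 1
  else if xi = Lval2 B v j ∧ min (B i) (v i j) < min (B (1 - i)) (v (1 - i) j) then 0
  else 1 / 2

/-- Expected total utility of player `i` from the pure bid vectors `p` (own) and
`q` (opponent): the sum over the two items of the item payoffs. -/
def payoff2 (B : Fin 2 → ℝ) (v : Fin 2 → Fin 2 → ℝ) (i : Fin 2) (p q : ℝ × ℝ) : ℝ :=
  (winProb2 B v i 0 p.1 q.1 * v i 0 - p.1) +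
    (winProb2 B v i 1 p.2 q.2 * v i 1 - p.2)

/-- Feasible bid vectors of a player with budget `Bi`. -/
def Feas (Bi : ℝ) : Set (ℝ × ℝ) := {p | 0 ≤ p.1 ∧ 0 ≤ p.2 ∧ p.1 + p.2 ≤ Bi}

/-- A mixed strategy with budget `Bi`: a probability measure on the feasible set. -/
def IsStrategy2 (Bi : ℝ) (μ : Measure (ℝ × ℝ)) : Prop :=
  IsProbabilityMeasure μ ∧ μ (Feas Bi) = 1

/-- Expected utility of player `i` when he plays `μ` and the opponent plays `ν`. -/
def expUtil2 (B : Fin 2 → ℝ) (v : Fin 2 → Fin 2 → ℝ) (i : Fin 2)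
    (μ ν : Measure (ℝ × ℝ)) : ℝ :=
  ∫ p, (∫ q, payoff2 B v i p q ∂ν) ∂μ

/-- `(F 0, F 1)` is a (mixed) Nash equilibrium of the two-item all-pay auction. -/
def IsNash2 (B : Fin 2 → ℝ) (v : Fin 2 → Fin 2 → ℝ) (F : Fin 2 → Measure (ℝ × ℝ)) :
    Prop :=
  (∀ i, IsStrategy2 (B i) (F i)) ∧
  ∀ i, ∀ μ, IsStrategy2 (B i) μ →
    expUtil2 B v i μ (F (1 - i)) ≤ expUtil2 B v i (F i) (F (1 - i))

/-- The uniform distribution on the segment from `a` to `b` in the plane: the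
pushforward of the uniform distribution on `[0, 1]` under the affine
parameterization of the segment. -/
def unifSeg (a b : ℝ × ℝ) : Measure (ℝ × ℝ) :=
  Measure.map (fun t : ℝ => ((1 - t) * a.1 + t * b.1, (1 - t) * a.2 + t * b.2))
    (volume.restrict (Icc (0 : ℝ) 1))

namespace NashAux

lemma measurable_seg (a b : ℝ × ℝ) :
    Measurable (fun t : ℝ => ((1 - t) * a.1 + t * b.1, (1 - t) * a.2 + t * b.2)) := by
  fun_prop

instance unifSeg_prob (a b : ℝ × ℝ) : IsProbabilityMeasure (unifSeg a b) := by
  have : IsProbabilityMeasure (volume.restrict (Icc (0:ℝ) 1)) := by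
    constructor
    rw [Measure.restrict_apply MeasurableSet.univ]
    simp [Real.volume_Icc]
  exact Measure.isProbabilityMeasure_map (measurable_seg a b).aemeasurable

lemma unifSeg_apply (a b : ℝ × ℝ) {A : Set (ℝ × ℝ)} (hA : MeasurableSet A) :
    unifSeg a b A = volume ({t | ((1 - t) * a.1 + t * b.1, (1 - t) * a.2 + t * b.2) ∈ A}
      ∩ Icc (0:ℝ) 1) := by
  rw [unifSeg, Measure.map_apply (measurable_seg a b) hA,
    Measure.restrict_apply]
  · rfl
  · exact (measurable_seg a b) hA

lemma integral_unifSeg (a b : ℝ × ℝ) (f : ℝ × ℝ → ℝ) (hf : Measurable f) :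
    ∫ q, f q ∂(unifSeg a b) =
      ∫ t in Icc (0:ℝ) 1, f ((1 - t) * a.1 + t * b.1, (1 - t) * a.2 + t * b.2) := by
  rw [unifSeg, integral_map (measurable_seg a b).aemeasurable hf.aestronglyMeasurable]

lemma integral_eq_indicator_vol {S : Set ℝ} (hS : MeasurableSet S) (f : ℝ → ℝ)
    (hae : ∀ᵐ t ∂volume, t ∈ Icc (0:ℝ) 1 → f t = S.indicator (fun _ => (1:ℝ)) t) :
    ∫ t in Icc (0:ℝ) 1, f t = (volume (S ∩ Icc (0:ℝ) 1)).toReal := by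
  have h1 : ∫ t in Icc (0:ℝ) 1, f t = ∫ t in Icc (0:ℝ) 1, S.indicator (fun _ => (1:ℝ)) t := by
    apply integral_congr_ae
    exact (ae_restrict_iff' measurableSet_Icc).mpr hae
  rw [h1, integral_indicator hS, Measure.restrict_restrict hS, setIntegral_const]
  simp
  rfl

/-- helper: a.e. pointwise description of the step integrand -/
lemma step_ae {c d x : ℝ} (r : ℝ) (hcd : c ≠ d) (S : Set ℝ)
    (hiff : ∀ t, t ≠ (x - c) / (d - c) → ((1 - t) * c + t * d < x ↔ t ∈ S))
    : ∀ᵐ t ∂volume, t ∈ Icc (0:ℝ) 1 →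
      (if (1 - t) * c + t * d < x then (1:ℝ) else if x < (1 - t) * c + t * d then 0 else r)
        = S.indicator (fun _ => (1:ℝ)) t := by
  have hd : d - c ≠ 0 := sub_ne_zero.mpr (Ne.symm hcd)
  have hnull : volume ({(x - c) / (d - c)} : Set ℝ) = 0 := measure_singleton _
  rw [ae_iff]
  apply measure_mono_null _ hnull
  intro t ht
  simp only [mem_setOf_eq] at ht
  simp only [mem_singleton_iff]
  by_contra hne
  apply ht
  intro _
  have h2 := hiff t hne
  have hval : (1 - t) * c + t * d ≠ x := by
    intro hv
    apply hne
    field_simp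
    linarith [hv]
  by_cases hlt : (1 - t) * c + t * d < x
  · rw [if_pos hlt, indicator_of_mem (h2.mp hlt)]
  · rw [if_neg hlt, if_pos (lt_of_le_of_ne (not_lt.mp hlt) (Ne.symm hval)),
      indicator_of_notMem (fun hmem => hlt (h2.mpr hmem))]

lemma seg_lt_iff_pos {c d x : ℝ} (hcd : c < d) (t : ℝ) :
    ((1 - t) * c + t * d < x ↔ t ∈ Iio ((x - c) / (d - c))) := by
  rw [mem_Iio, lt_div_iff₀ (by linarith : (0:ℝ) < d - c)]
  constructor <;> intro h <;> nlinarith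

lemma seg_lt_iff_neg {c d x : ℝ} (hcd : d < c) (t : ℝ) :
    ((1 - t) * c + t * d < x ↔ t ∈ Ioi ((x - c) / (d - c))) := by
  rw [mem_Ioi, div_lt_iff_of_neg (by linarith : d - c < 0)]
  constructor <;> intro h <;> nlinarith

/-- increasing segment, middle case -/
lemma stepInt_mid {c d x : ℝ} (r : ℝ) (hcd : c < d) (h1 : c ≤ x) (h2 : x ≤ d) :
    ∫ t in Icc (0:ℝ) 1,
      (if (1 - t) * c + t * d < x then (1:ℝ) else if x < (1 - t) * c + t * d then 0 else r)
      = (x - c) / (d - c) := by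
  set α := (x - c) / (d - c) with hα
  have hd : 0 < d - c := by linarith
  have hα0 : 0 ≤ α := div_nonneg (by linarith) hd.le
  have hα1 : α ≤ 1 := by rw [hα, div_le_one hd]; linarith
  rw [integral_eq_indicator_vol measurableSet_Iio _
    (step_ae r hcd.ne (Iio α) (fun t _ => seg_lt_iff_pos hcd t))]
  have : Iio α ∩ Icc (0:ℝ) 1 = Ico 0 α := by
    ext t
    simp only [mem_inter_iff, mem_Iio, mem_Icc, mem_Ico]
    constructor
    · rintro ⟨h, h', _⟩; exact ⟨h', h⟩
    · rintro ⟨h, h'⟩; exact ⟨h', h, by linarith⟩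
  rw [this, Real.volume_Ico, ENNReal.toReal_ofReal (by linarith)]
  ring

/-- increasing segment, low case -/
lemma stepInt_lo {c d x : ℝ} (r : ℝ) (hcd : c < d) (h : x ≤ c) :
    ∫ t in Icc (0:ℝ) 1,
      (if (1 - t) * c + t * d < x then (1:ℝ) else if x < (1 - t) * c + t * d then 0 else r)
      = 0 := by
  set α := (x - c) / (d - c) with hα
  have hd : 0 < d - c := by linarith
  have hα0 : α ≤ 0 := div_nonpos_of_nonpos_of_nonneg (by linarith) hd.le
  rw [integral_eq_indicator_vol measurableSet_Iio _
    (step_ae r hcd.ne (Iio α) (fun t _ => seg_lt_iff_pos hcd t))]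
  have : Iio α ∩ Icc (0:ℝ) 1 = ∅ := by
    rw [eq_empty_iff_forall_notMem]
    rintro t ⟨h1, h2, _⟩
    rw [mem_Iio] at h1
    exact absurd (lt_of_lt_of_le h1 hα0) (not_lt.mpr h2)
  rw [this]
  simp

/-- increasing segment, high case -/
lemma stepInt_hi {c d x : ℝ} (r : ℝ) (hcd : c < d) (h : d ≤ x) :
    ∫ t in Icc (0:ℝ) 1,
      (if (1 - t) * c + t * d < x then (1:ℝ) else if x < (1 - t) * c + t * d then 0 else r)
      = 1 := by
  set α := (x - c) / (d - c) with hα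
  have hd : 0 < d - c := by linarith
  have hα1 : 1 ≤ α := by rw [hα, le_div_iff₀ hd]; linarith
  rw [integral_eq_indicator_vol measurableSet_Iio _
    (step_ae r hcd.ne (Iio α) (fun t _ => seg_lt_iff_pos hcd t))]
  apply le_antisymm
  · calc (volume (Iio α ∩ Icc (0:ℝ) 1)).toReal ≤ (volume (Icc (0:ℝ) 1)).toReal := by
          apply ENNReal.toReal_mono (by simp [Real.volume_Icc])
          exact measure_mono inter_subset_right
      _ = 1 := by simp [Real.volume_Icc]
  · calc (1:ℝ) = (volume (Ico (0:ℝ) 1)).toReal := by simp [Real.volume_Ico]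
      _ ≤ (volume (Iio α ∩ Icc (0:ℝ) 1)).toReal := by
          apply ENNReal.toReal_mono
          · exact ne_of_lt (lt_of_le_of_lt (measure_mono inter_subset_right)
              (by simp [Real.volume_Icc]))
          · apply measure_mono
            rintro t ⟨h1, h2⟩
            exact ⟨lt_of_lt_of_le h2 hα1, h1, h2.le⟩

/-- decreasing segment, middle case -/
lemma stepInt_mid' {c d x : ℝ} (r : ℝ) (hcd : d < c) (h1 : d ≤ x) (h2 : x ≤ c) :
    ∫ t in Icc (0:ℝ) 1,
      (if (1 - t) * c + t * d < x then (1:ℝ) else if x < (1 - t) * c + t * d then 0 else r)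
      = (x - d) / (c - d) := by
  set α := (x - c) / (d - c) with hα
  have hd : d - c < 0 := by linarith
  have hα0 : 0 ≤ α := div_nonneg_of_nonpos (by linarith) hd.le
  have hα1 : α ≤ 1 := by rw [hα, div_le_iff_of_neg hd]; linarith
  rw [integral_eq_indicator_vol measurableSet_Ioi _
    (step_ae r hcd.ne' (Ioi α) (fun t _ => seg_lt_iff_neg hcd t))]
  have : Ioi α ∩ Icc (0:ℝ) 1 = Ioc α 1 := by
    ext t
    simp only [mem_inter_iff, mem_Ioi, mem_Icc, mem_Ioc]
    constructor
    · rintro ⟨h, _, h''⟩; exact ⟨h, h''⟩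
    · rintro ⟨h, h'⟩; exact ⟨h, by linarith, h'⟩
  rw [this, Real.volume_Ioc, ENNReal.toReal_ofReal (by linarith)]
  rw [hα, one_sub_div (ne_of_lt hd), div_eq_div_iff (ne_of_lt hd) (by linarith : c - d ≠ 0)]
  ring

/-- decreasing segment, low case -/
lemma stepInt_lo' {c d x : ℝ} (r : ℝ) (hcd : d < c) (h : x ≤ d) :
    ∫ t in Icc (0:ℝ) 1,
      (if (1 - t) * c + t * d < x then (1:ℝ) else if x < (1 - t) * c + t * d then 0 else r)
      = 0 := by
  set α := (x - c) / (d - c) with hα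
  have hd : d - c < 0 := by linarith
  have hα1 : 1 ≤ α := by rw [hα, le_div_iff_of_neg hd]; linarith
  rw [integral_eq_indicator_vol measurableSet_Ioi _
    (step_ae r hcd.ne' (Ioi α) (fun t _ => seg_lt_iff_neg hcd t))]
  have : Ioi α ∩ Icc (0:ℝ) 1 = ∅ := by
    rw [eq_empty_iff_forall_notMem]
    rintro t ⟨h1, _, h3⟩
    rw [mem_Ioi] at h1
    linarith
  rw [this]
  simp

/-- decreasing segment, high case -/
lemma stepInt_hi' {c d x : ℝ} (r : ℝ) (hcd : d < c) (h : c ≤ x) :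
    ∫ t in Icc (0:ℝ) 1,
      (if (1 - t) * c + t * d < x then (1:ℝ) else if x < (1 - t) * c + t * d then 0 else r)
      = 1 := by
  set α := (x - c) / (d - c) with hα
  have hd : d - c < 0 := by linarith
  have hα0 : α ≤ 0 := div_nonpos_of_nonneg_of_nonpos (by linarith) hd.le
  rw [integral_eq_indicator_vol measurableSet_Ioi _
    (step_ae r hcd.ne' (Ioi α) (fun t _ => seg_lt_iff_neg hcd t))]
  apply le_antisymm
  · calc (volume (Ioi α ∩ Icc (0:ℝ) 1)).toReal ≤ (volume (Icc (0:ℝ) 1)).toReal := by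
          apply ENNReal.toReal_mono (by simp [Real.volume_Icc])
          exact measure_mono inter_subset_right
      _ = 1 := by simp [Real.volume_Icc]
  · calc (1:ℝ) = (volume (Ioc (0:ℝ) 1)).toReal := by simp [Real.volume_Ioc]
      _ ≤ (volume (Ioi α ∩ Icc (0:ℝ) 1)).toReal := by
          apply ENNReal.toReal_mono
          · exact ne_of_lt (lt_of_le_of_lt (measure_mono inter_subset_right)
              (by simp [Real.volume_Icc]))
          · apply measure_mono
            rintro t ⟨h1, h2⟩
            exact ⟨lt_of_le_of_lt hα0 h1, h1.le, h2⟩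

/-- constant segment -/
lemma stepInt_const (c x r : ℝ) :
    ∫ t in Icc (0:ℝ) 1,
      (if (1 - t) * c + t * c < x then (1:ℝ) else if x < (1 - t) * c + t * c then 0 else r)
      = if c < x then 1 else if x < c then 0 else r := by
  have hc : ∀ t : ℝ, (1 - t) * c + t * c = c := fun t => by ring
  simp only [hc]
  rw [setIntegral_const]
  simp [Real.volume_Icc]


variable (B : Fin 2 → ℝ) (v : Fin 2 → Fin 2 → ℝ)

/-- tie value -/
def tieval (i j : Fin 2) (xi : ℝ) : ℝ :=
  if xi = Lval2 B v j ∧ min (B (1 - i)) (v (1 - i) j) < min (B i) (v i j) then 1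
  else if xi = Lval2 B v j ∧ min (B i) (v i j) < min (B (1 - i)) (v (1 - i) j) then 0
  else 1 / 2

lemma winProb2_eq (i j : Fin 2) (xi xo : ℝ) :
    winProb2 B v i j xi xo =
      if xo < xi then 1 else if xi < xo then 0 else tieval B v i j xi := rfl

lemma tieval_nonneg (i j : Fin 2) (xi : ℝ) : 0 ≤ tieval B v i j xi := by
  unfold tieval; split_ifs <;> norm_num

lemma tieval_le_one (i j : Fin 2) (xi : ℝ) : tieval B v i j xi ≤ 1 := by
  unfold tieval; split_ifs <;> norm_num

lemma winProb2_nonneg (i j : Fin 2) (xi xo : ℝ) : 0 ≤ winProb2 B v i j xi xo := by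
  rw [winProb2_eq]
  split_ifs with h1 h2
  · norm_num
  · norm_num
  · exact tieval_nonneg B v i j xi

lemma winProb2_le_one (i j : Fin 2) (xi xo : ℝ) : winProb2 B v i j xi xo ≤ 1 := by
  rw [winProb2_eq]
  split_ifs with h1 h2
  · norm_num
  · norm_num
  · exact tieval_le_one B v i j xi

lemma measurable_tieval (i j : Fin 2) : Measurable (fun xi => tieval B v i j xi) := by
  unfold tieval
  apply Measurable.ite
  · by_cases h : min (B (1 - i)) (v (1 - i) j) < min (B i) (v i j)
    · simp only [h, and_true]; exact measurableSet_eq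
    · simp only [h, and_false]; exact MeasurableSet.empty
  · exact measurable_const
  apply Measurable.ite
  · by_cases h : min (B i) (v i j) < min (B (1 - i)) (v (1 - i) j)
    · simp only [h, and_true]; exact measurableSet_eq
    · simp only [h, and_false]; exact MeasurableSet.empty
  · exact measurable_const
  · exact measurable_const

lemma measurable_winProb2_pair (i j : Fin 2) :
    Measurable (fun x : ℝ × ℝ => winProb2 B v i j x.1 x.2) := by
  simp only [winProb2_eq]
  apply Measurable.ite (measurableSet_lt measurable_snd measurable_fst) measurable_const
  apply Measurable.ite (measurableSet_lt measurable_fst measurable_snd) measurable_const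
  exact (measurable_tieval B v i j).comp measurable_fst

lemma measurable_payoff2_pair (i : Fin 2) :
    Measurable (fun x : (ℝ × ℝ) × (ℝ × ℝ) => payoff2 B v i x.1 x.2) := by
  unfold payoff2
  apply Measurable.add
  · exact (((measurable_winProb2_pair B v i 0).comp
      ((measurable_fst.fst).prodMk (measurable_snd.fst))).mul measurable_const).sub
      measurable_fst.fst
  · exact (((measurable_winProb2_pair B v i 1).comp
      ((measurable_fst.snd).prodMk (measurable_snd.snd))).mul measurable_const).sub
      measurable_fst.snd

lemma measurable_payoff2 (i : Fin 2) (p : ℝ × ℝ) :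
    Measurable (fun q : ℝ × ℝ => payoff2 B v i p q) :=
  (measurable_payoff2_pair B v i).comp (measurable_const.prodMk measurable_id)

lemma abs_payoff2_le (i : Fin 2) (p q : ℝ × ℝ) :
    |payoff2 B v i p q| ≤ |v i 0| + |v i 1| + |p.1| + |p.2| := by
  have h0 := winProb2_nonneg B v i 0 p.1 q.1
  have h1 := winProb2_le_one B v i 0 p.1 q.1
  have h2 := winProb2_nonneg B v i 1 p.2 q.2
  have h3 := winProb2_le_one B v i 1 p.2 q.2
  have a0 := le_abs_self (v i 0)
  have a0' := neg_abs_le (v i 0)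
  have a1 := le_abs_self (v i 1)
  have a1' := neg_abs_le (v i 1)
  have b0 := le_abs_self p.1
  have b0' := neg_abs_le p.1
  have b1 := le_abs_self p.2
  have b1' := neg_abs_le p.2
  have c0 := abs_nonneg (v i 0)
  have c1 := abs_nonneg (v i 1)
  rw [abs_le]
  unfold payoff2
  constructor
  · nlinarith [mul_le_mul_of_nonneg_left a0 h0, mul_le_mul_of_nonneg_left a1 h2]
  · nlinarith [mul_le_mul_of_nonneg_left a0 h0, mul_le_mul_of_nonneg_left a1 h2,
      mul_le_mul_of_nonneg_right (sub_nonneg.mpr h1) c0,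
      mul_le_mul_of_nonneg_right (sub_nonneg.mpr h3) c1]


lemma integrable_of_bdd {ν : Measure (ℝ × ℝ)} [IsFiniteMeasure ν] {f : ℝ × ℝ → ℝ}
    (hf : Measurable f) {C : ℝ} (hC : ∀ x, |f x| ≤ C) : Integrable f ν := by
  apply Integrable.mono' (integrable_const C) hf.aestronglyMeasurable
  exact Filter.Eventually.of_forall hC

/-- integral against a three-component mixture -/
lemma integral_three_mix (μ1 μ2 μ3 : Measure (ℝ × ℝ))
    [IsFiniteMeasure μ1] [IsFiniteMeasure μ2] [IsFiniteMeasure μ3]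
    {r1 r2 r3 : ℝ} (h1 : 0 ≤ r1) (h2 : 0 ≤ r2) (h3 : 0 ≤ r3)
    {f : ℝ × ℝ → ℝ} (hf : Measurable f) {C : ℝ} (hC : ∀ x, |f x| ≤ C) :
    ∫ x, f x ∂(ENNReal.ofReal r1 • μ1 + ENNReal.ofReal r2 • μ2 + ENNReal.ofReal r3 • μ3)
      = r1 * ∫ x, f x ∂μ1 + r2 * ∫ x, f x ∂μ2 + r3 * ∫ x, f x ∂μ3 := by
  have i1 : Integrable f (ENNReal.ofReal r1 • μ1) :=
    (integrable_of_bdd hf hC).smul_measure ENNReal.ofReal_ne_top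
  have i2 : Integrable f (ENNReal.ofReal r2 • μ2) :=
    (integrable_of_bdd hf hC).smul_measure ENNReal.ofReal_ne_top
  have i3 : Integrable f (ENNReal.ofReal r3 • μ3) :=
    (integrable_of_bdd hf hC).smul_measure ENNReal.ofReal_ne_top
  rw [integral_add_measure (i1.add_measure i2) i3, integral_add_measure i1 i2,
    integral_smul_measure, integral_smul_measure, integral_smul_measure,
    ENNReal.toReal_ofReal h1, ENNReal.toReal_ofReal h2, ENNReal.toReal_ofReal h3]
  simp [smul_eq_mul]

/-- integral against a two-component mixture -/
lemma integral_two_mix (μ1 μ2 : Measure (ℝ × ℝ))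
    [IsFiniteMeasure μ1] [IsFiniteMeasure μ2]
    {r1 r2 : ℝ} (h1 : 0 ≤ r1) (h2 : 0 ≤ r2)
    {f : ℝ × ℝ → ℝ} (hf : Measurable f) {C : ℝ} (hC : ∀ x, |f x| ≤ C) :
    ∫ x, f x ∂(ENNReal.ofReal r1 • μ1 + ENNReal.ofReal r2 • μ2)
      = r1 * ∫ x, f x ∂μ1 + r2 * ∫ x, f x ∂μ2 := by
  have i1 : Integrable f (ENNReal.ofReal r1 • μ1) :=
    (integrable_of_bdd hf hC).smul_measure ENNReal.ofReal_ne_top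
  have i2 : Integrable f (ENNReal.ofReal r2 • μ2) :=
    (integrable_of_bdd hf hC).smul_measure ENNReal.ofReal_ne_top
  rw [integral_add_measure i1 i2, integral_smul_measure, integral_smul_measure,
    ENNReal.toReal_ofReal h1, ENNReal.toReal_ofReal h2]
  simp [smul_eq_mul]

/-- splitting the payoff integral into the two items -/
lemma payoff_split (i : Fin 2) (p : ℝ × ℝ) (ν : Measure (ℝ × ℝ)) [IsProbabilityMeasure ν] :
    ∫ q, payoff2 B v i p q ∂ν =
      ((∫ q, winProb2 B v i 0 p.1 q.1 ∂ν) * v i 0 - p.1) +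
        ((∫ q, winProb2 B v i 1 p.2 q.2 ∂ν) * v i 1 - p.2) := by
  have m0 : Measurable (fun q : ℝ × ℝ => winProb2 B v i 0 p.1 q.1) :=
    (measurable_winProb2_pair B v i 0).comp (measurable_const.prodMk measurable_fst)
  have m1 : Measurable (fun q : ℝ × ℝ => winProb2 B v i 1 p.2 q.2) :=
    (measurable_winProb2_pair B v i 1).comp (measurable_const.prodMk measurable_snd)
  have bdd : ∀ (g : ℝ × ℝ → ℝ), (∀ q, 0 ≤ g q) → (∀ q, g q ≤ 1) → ∀ q, |g q| ≤ 1 := by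
    intro g hg hg' q
    rw [abs_le]
    exact ⟨by linarith [hg q], hg' q⟩
  have i0 : Integrable (fun q : ℝ × ℝ => winProb2 B v i 0 p.1 q.1) ν :=
    integrable_of_bdd m0 (bdd _ (fun q => winProb2_nonneg B v i 0 _ _)
      (fun q => winProb2_le_one B v i 0 _ _))
  have i1 : Integrable (fun q : ℝ × ℝ => winProb2 B v i 1 p.2 q.2) ν :=
    integrable_of_bdd m1 (bdd _ (fun q => winProb2_nonneg B v i 1 _ _)
      (fun q => winProb2_le_one B v i 1 _ _))
  have I0 : Integrable (fun q : ℝ × ℝ => winProb2 B v i 0 p.1 q.1 * v i 0 - p.1) ν :=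
    (i0.mul_const _).sub (integrable_const _)
  have I1 : Integrable (fun q : ℝ × ℝ => winProb2 B v i 1 p.2 q.2 * v i 1 - p.2) ν :=
    (i1.mul_const _).sub (integrable_const _)
  have J0 : Integrable (fun q : ℝ × ℝ => winProb2 B v i 0 p.1 q.1 * v i 0) ν :=
    i0.mul_const _
  have J1 : Integrable (fun q : ℝ × ℝ => winProb2 B v i 1 p.2 q.2 * v i 1) ν :=
    i1.mul_const _
  unfold payoff2
  rw [integral_add I0 I1, integral_sub J0 (integrable_const _),
    integral_sub J1 (integrable_const _),
    integral_mul_const, integral_mul_const, integral_const]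
  simp

/-- win-prob integral over a segment, first coordinate -/
lemma winProb_unifSeg_fst (i j : Fin 2) (x : ℝ) (a b : ℝ × ℝ) :
    ∫ q, winProb2 B v i j x q.1 ∂(unifSeg a b) =
      ∫ t in Icc (0:ℝ) 1, (if (1 - t) * a.1 + t * b.1 < x then (1:ℝ)
        else if x < (1 - t) * a.1 + t * b.1 then 0 else tieval B v i j x) := by
  rw [integral_unifSeg a b (fun q => winProb2 B v i j x q.1)
    ((measurable_winProb2_pair B v i j).comp (measurable_const.prodMk measurable_fst))]
  simp only [winProb2_eq]

/-- win-prob integral over a segment, second coordinate -/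
lemma winProb_unifSeg_snd (i j : Fin 2) (x : ℝ) (a b : ℝ × ℝ) :
    ∫ q, winProb2 B v i j x q.2 ∂(unifSeg a b) =
      ∫ t in Icc (0:ℝ) 1, (if (1 - t) * a.2 + t * b.2 < x then (1:ℝ)
        else if x < (1 - t) * a.2 + t * b.2 then 0 else tieval B v i j x) := by
  rw [integral_unifSeg a b (fun q => winProb2 B v i j x q.2)
    ((measurable_winProb2_pair B v i j).comp (measurable_const.prodMk measurable_snd))]
  simp only [winProb2_eq]


/-- a segment with feasible endpoints is a.s. feasible -/
lemma measurableSet_Feas (c : ℝ) : MeasurableSet (Feas c) := by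
  unfold Feas
  exact ((measurableSet_le measurable_const measurable_fst).inter
    ((measurableSet_le measurable_const measurable_snd).inter
      (measurableSet_le (measurable_fst.add measurable_snd) measurable_const))).congr rfl

lemma unifSeg_feas {a b : ℝ × ℝ} {c : ℝ} (ha : a ∈ Feas c) (hb : b ∈ Feas c) :
    unifSeg a b (Feas c) = 1 := by
  rw [unifSeg_apply a b (measurableSet_Feas c)]
  have : {t | ((1 - t) * a.1 + t * b.1, (1 - t) * a.2 + t * b.2) ∈ Feas c} ∩ Icc (0:ℝ) 1
      = Icc (0:ℝ) 1 := by
    apply inter_eq_right.mpr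
    intro t ht
    obtain ⟨ht0, ht1⟩ := ht
    obtain ⟨ha1, ha2, ha3⟩ := ha
    obtain ⟨hb1, hb2, hb3⟩ := hb
    refine ⟨?_, ?_, ?_⟩
    · have : 0 ≤ (1 - t) * a.1 := mul_nonneg (by linarith) ha1
      have : 0 ≤ t * b.1 := mul_nonneg ht0 hb1
      simp only [mem_setOf_eq]
      linarith
    · have : 0 ≤ (1 - t) * a.2 := mul_nonneg (by linarith) ha2
      have : 0 ≤ t * b.2 := mul_nonneg ht0 hb2
      simp only [mem_setOf_eq]
      linarith
    · simp only [mem_setOf_eq]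
      nlinarith
  rw [this]
  simp [Real.volume_Icc]

lemma mix3_apply (μ1 μ2 μ3 : Measure (ℝ × ℝ)) (c1 c2 c3 : ENNReal) (A : Set (ℝ × ℝ)) :
    (c1 • μ1 + c2 • μ2 + c3 • μ3) A = c1 * μ1 A + c2 * μ2 A + c3 * μ3 A := by
  simp [Measure.add_apply, Measure.smul_apply, smul_eq_mul]

lemma mix2_apply (μ1 μ2 : Measure (ℝ × ℝ)) (c1 c2 : ENNReal) (A : Set (ℝ × ℝ)) :
    (c1 • μ1 + c2 • μ2) A = c1 * μ1 A + c2 * μ2 A := by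
  simp [Measure.add_apply, Measure.smul_apply, smul_eq_mul]

lemma winProb_unifSeg_fst' (i j : Fin 2) (x a1 a2 b1 b2 : ℝ) :
    ∫ q, winProb2 B v i j x q.1 ∂(unifSeg (a1, a2) (b1, b2)) =
      ∫ t in Icc (0:ℝ) 1, (if (1 - t) * a1 + t * b1 < x then (1:ℝ)
        else if x < (1 - t) * a1 + t * b1 then 0 else tieval B v i j x) :=
  winProb_unifSeg_fst B v i j x (a1, a2) (b1, b2)

lemma winProb_unifSeg_snd' (i j : Fin 2) (x a1 a2 b1 b2 : ℝ) :
    ∫ q, winProb2 B v i j x q.2 ∂(unifSeg (a1, a2) (b1, b2)) =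
      ∫ t in Icc (0:ℝ) 1, (if (1 - t) * a2 + t * b2 < x then (1:ℝ)
        else if x < (1 - t) * a2 + t * b2 then 0 else tieval B v i j x) :=
  winProb_unifSeg_snd B v i j x (a1, a2) (b1, b2)

end NashAux

open NashAux

set_option maxHeartbeats 2000000 in
/-- Case 3 of the two-item auction with asymmetric budgets (`s` has the larger
budget, `w = 1 - s`): if `v_{s1} > L₁` and `v_{s2} = L₂` (together with the
feasibility conditions `T₂ ≥ 0`, `T₄ ≥ 0`, `L₁ + T₂ ≤ B_s`), then the described
profile — an atom for `s` at `(L₁, 0)` together with mixtures of uniform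
distributions on segments — is a Nash equilibrium. -/
theorem nash_two_items_case3 (B : Fin 2 → ℝ) (v : Fin 2 → Fin 2 → ℝ)
    (hB : ∀ i, 0 ≤ B i) (hv : ∀ i j, 0 < v i j)
    (s : Fin 2) (hs : B (1 - s) < B s)
    (L1 L2 : ℝ) (hL1 : L1 = Lval2 B v 0) (hL2 : L2 = Lval2 B v 1)
    (hvs1 : L1 < v s 0) (hvs2 : v s 1 = L2)
    (T2 T4 : ℝ)
    (hT2 : T2 = L2 - L1 / v (1 - s) 0 * v (1 - s) 1)
    (hT4 : T4 = L2 - (v s 0 - L1) / v s 0 * v s 1)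
    (hT2pos : 0 ≤ T2) (hT4pos : 0 ≤ T4) (hbud : L1 + T2 ≤ B s) :
    IsNash2 B v (fun k =>
      if k = s then
        ENNReal.ofReal (1 - L2 / v (1 - s) 1) • Measure.dirac ((L1, 0) : ℝ × ℝ) +
          ENNReal.ofReal (T2 / v (1 - s) 1) • unifSeg (L1, 0) (L1, T2) +
          ENNReal.ofReal (L1 / v (1 - s) 0) • unifSeg (0, L2) (L1, T2)
      else
        ENNReal.ofReal ((L2 - T4) / v s 1) • unifSeg (0, T4) (0, L2) +
          ENNReal.ofReal (L1 / v s 0) • unifSeg (0, T4) (L1, 0)) := by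
  classical
  have hsw : (1 : Fin 2) - s ≠ s := by fin_cases s <;> decide
  have hss : 1 - (1 - s) = s := by fin_cases s <;> decide
  have hBswap : min (B 0) (B 1) = B (1 - s) := by
    fin_cases s
    · exact min_eq_right (le_of_lt hs)
    · exact min_comm (B 0) (B 1) ▸ min_eq_right (le_of_lt hs)
  have hvswap : ∀ j, min (v 0 j) (v 1 j) = min (v s j) (v (1 - s) j) := by
    intro j
    fin_cases s
    · rfl
    · exact min_comm (v 0 j) (v 1 j)
  have hL1e : L1 = min (B (1 - s)) (min (v s 0) (v (1 - s) 0)) := by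
    rw [hL1, Lval2, hBswap, hvswap 0]
  have hL2e : L2 = min (B (1 - s)) (min (v s 1) (v (1 - s) 1)) := by
    rw [hL2, Lval2, hBswap, hvswap 1]
  have hva1 : (0:ℝ) < v s 0 := hv s 0
  have hva2 : (0:ℝ) < v s 1 := hv s 1
  have hvb1 : (0:ℝ) < v (1 - s) 0 := hv (1 - s) 0
  have hvb2 : (0:ℝ) < v (1 - s) 1 := hv (1 - s) 1
  have hL2pos : (0:ℝ) < L2 := hvs2 ▸ hva2
  have hL2Bw : L2 ≤ B (1 - s) := hL2e ▸ min_le_left _ _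
  have hL2b2 : L2 ≤ v (1 - s) 1 := hL2e ▸ le_trans (min_le_right _ _) (min_le_right _ _)
  have hBwpos : (0:ℝ) < B (1 - s) := lt_of_lt_of_le hL2pos hL2Bw
  have hL1pos : (0:ℝ) < L1 := by
    rw [hL1e]
    exact lt_min hBwpos (lt_min hva1 hvb1)
  have hL1Bw : L1 ≤ B (1 - s) := hL1e ▸ min_le_left _ _
  have hL1b1 : L1 ≤ v (1 - s) 0 := hL1e ▸ le_trans (min_le_right _ _) (min_le_right _ _)
  have hL1min : min (B (1 - s)) (v (1 - s) 0) = L1 := by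
    apply le_antisymm
    · rcases min_choice (B (1 - s)) (min (v s 0) (v (1 - s) 0)) with h | h
      · rw [← hL1e] at h; rw [h] at hL1e ⊢; exact min_le_left _ _
      · rw [← hL1e] at h
        rcases min_choice (v s 0) (v (1 - s) 0) with h' | h'
        · rw [h'] at h; exact absurd h (by linarith [hvs1])
        · rw [h'] at h; rw [h]; exact min_le_right _ _
    · exact le_min hL1Bw hL1b1
  have hL1cases : L1 = B (1 - s) ∨ L1 = v (1 - s) 0 := by
    rcases min_choice (B (1 - s)) (v (1 - s) 0) with h | h <;> rw [hL1min] at h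
    · exact Or.inl h
    · exact Or.inr h
  have hT4e : T4 = L1 * L2 / v s 0 := by
    rw [hT4, hvs2]
    field_simp
    ring
  have hT4pos' : (0:ℝ) < T4 := by
    rw [hT4e]; positivity
  have hT4lt : T4 < L2 := by
    rw [hT4e, div_lt_iff₀ hva1]
    nlinarith
  have hT2lt : T2 < L2 := by
    rw [hT2]
    have : 0 < L1 / v (1 - s) 0 * v (1 - s) 1 := by positivity
    linarith
  have hmassS : L1 / v (1 - s) 0 = (L2 - T2) / v (1 - s) 1 := by
    rw [hT2]
    field_simp
    ring
  have hmassW : (L2 - T4) / v s 1 = 1 - L1 / v s 0 := by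
    rw [hvs2, hT4e]
    field_simp
  have hn1le : L1 / v s 0 ≤ 1 := by
    rw [div_le_one hva1]; exact hvs1.le
  have hn0 : 0 ≤ (L2 - T4) / v s 1 := by
    apply div_nonneg (by linarith) hva2.le
  have hn1 : 0 ≤ L1 / v s 0 := by positivity
  have hm0 : 0 ≤ 1 - L2 / v (1 - s) 1 := by
    rw [sub_nonneg, div_le_one hvb2]; exact hL2b2
  have hm1 : 0 ≤ T2 / v (1 - s) 1 := by positivity
  have hm2 : 0 ≤ L1 / v (1 - s) 0 := by positivity
  have hsumS : (1 - L2 / v (1 - s) 1) + T2 / v (1 - s) 1 + L1 / v (1 - s) 0 = 1 := by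
    rw [hmassS]
    field_simp
    ring
  have hsumW : (L2 - T4) / v s 1 + L1 / v s 0 = 1 := by
    rw [hmassW]; ring
  set νs := ENNReal.ofReal (1 - L2 / v (1 - s) 1) • Measure.dirac ((L1, 0) : ℝ × ℝ) +
      ENNReal.ofReal (T2 / v (1 - s) 1) • unifSeg (L1, 0) (L1, T2) +
      ENNReal.ofReal (L1 / v (1 - s) 0) • unifSeg (0, L2) (L1, T2) with hvs
  set νw := ENNReal.ofReal ((L2 - T4) / v s 1) • unifSeg (0, T4) (0, L2) +
      ENNReal.ofReal (L1 / v s 0) • unifSeg (0, T4) (L1, 0) with hvw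
  have sumS1 : ENNReal.ofReal (1 - L2 / v (1 - s) 1) * 1 + ENNReal.ofReal (T2 / v (1 - s) 1) * 1
      + ENNReal.ofReal (L1 / v (1 - s) 0) * 1 = 1 := by
    rw [mul_one, mul_one, mul_one, ← ENNReal.ofReal_add hm0 hm1,
      ← ENNReal.ofReal_add (by linarith) hm2, hsumS, ENNReal.ofReal_one]
  have sumW1 : ENNReal.ofReal ((L2 - T4) / v s 1) * 1 + ENNReal.ofReal (L1 / v s 0) * 1 = 1 := by
    rw [mul_one, mul_one, ← ENNReal.ofReal_add hn0 hn1, hsumW, ENNReal.ofReal_one]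
  haveI instS : IsProbabilityMeasure νs := by
    constructor
    rw [hvs, mix3_apply, measure_univ, measure_univ, measure_univ, sumS1]
  haveI instW : IsProbabilityMeasure νw := by
    constructor
    rw [hvw, mix2_apply, measure_univ, measure_univ, sumW1]
  have hL1Bs : L1 ≤ B s := le_trans hL1Bw hs.le
  have hL2Bs : L2 ≤ B s := le_trans hL2Bw hs.le
  have feas1 : ((L1, 0) : ℝ × ℝ) ∈ Feas (B s) := ⟨hL1pos.le, le_refl 0, by simpa using hL1Bs⟩
  have feas2 : ((L1, T2) : ℝ × ℝ) ∈ Feas (B s) := ⟨hL1pos.le, hT2pos, hbud⟩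
  have feas3 : ((0, L2) : ℝ × ℝ) ∈ Feas (B s) := ⟨le_refl 0, hL2pos.le, by simpa using hL2Bs⟩
  have feas4 : ((0, T4) : ℝ × ℝ) ∈ Feas (B (1 - s)) :=
    ⟨le_refl 0, hT4pos, by simpa using le_trans hT4lt.le hL2Bw⟩
  have feas5 : ((0, L2) : ℝ × ℝ) ∈ Feas (B (1 - s)) := ⟨le_refl 0, hL2pos.le, by simpa using hL2Bw⟩
  have feas6 : ((L1, 0) : ℝ × ℝ) ∈ Feas (B (1 - s)) := ⟨hL1pos.le, le_refl 0, by simpa using hL1Bw⟩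
  have hstratS : IsStrategy2 (B s) νs := by
    refine ⟨instS, ?_⟩
    rw [hvs, mix3_apply, Measure.dirac_apply' _ (measurableSet_Feas (B s)),
      indicator_of_mem feas1, unifSeg_feas feas1 feas2, unifSeg_feas feas3 feas2]
    simpa using sumS1
  have hstratW : IsStrategy2 (B (1 - s)) νw := by
    refine ⟨instW, ?_⟩
    rw [hvw, mix2_apply, unifSeg_feas feas4 feas5, unifSeg_feas feas4 feas6]
    exact sumW1
  have hkform : ∀ k : Fin 2, k ≠ s → k = 1 - s := by
    intro k
    fin_cases k <;> fin_cases s <;> decide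
  have measq1 : ∀ (i j : Fin 2) (x : ℝ), Measurable (fun q : ℝ × ℝ => winProb2 B v i j x q.1) :=
    fun i j x => (measurable_winProb2_pair B v i j).comp (measurable_const.prodMk measurable_fst)
  have measq2 : ∀ (i j : Fin 2) (x : ℝ), Measurable (fun q : ℝ × ℝ => winProb2 B v i j x q.2) :=
    fun i j x => (measurable_winProb2_pair B v i j).comp (measurable_const.prodMk measurable_snd)
  have bnd1 : ∀ (i j : Fin 2) (x : ℝ) (q : ℝ × ℝ), |winProb2 B v i j x q.1| ≤ 1 := by
    intro i j x q
    rw [abs_le]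
    exact ⟨by linarith [winProb2_nonneg B v i j x q.1], winProb2_le_one B v i j x q.1⟩
  have bnd2 : ∀ (i j : Fin 2) (x : ℝ) (q : ℝ × ℝ), |winProb2 B v i j x q.2| ≤ 1 := by
    intro i j x q
    rw [abs_le]
    exact ⟨by linarith [winProb2_nonneg B v i j x q.2], winProb2_le_one B v i j x q.2⟩
  -- player s's win probabilities against νw
  have hL1ne : L1 ≠ 0 := hL1pos.ne'
  have hL2ne : L2 ≠ 0 := hL2pos.ne'
  have ha1ne : v s 0 ≠ 0 := hva1.ne'
  have ha2ne : v s 1 ≠ 0 := hva2.ne'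
  have hb1ne : v (1 - s) 0 ≠ 0 := hvb1.ne'
  have hb2ne : v (1 - s) 1 ≠ 0 := hvb2.ne'
  have hT4ne : T4 ≠ 0 := hT4pos'.ne'
  have hL2T2ne : L2 - T2 ≠ 0 := sub_ne_zero.mpr (ne_of_gt hT2lt)
  have hn1T4 : L1 / v s 0 = T4 / L2 := by
    rw [hT4e]; field_simp
  have tvS10 : tieval B v s 0 0 = 1 / 2 := by
    unfold NashAux.tieval
    rw [← hL1, if_neg (fun h => hL1pos.ne (h.1 : (0:ℝ) = L1)),
      if_neg (fun h => hL1pos.ne (h.1 : (0:ℝ) = L1))]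
  have tvW20 : tieval B v (1 - s) 1 0 = 1 / 2 := by
    unfold NashAux.tieval
    rw [← hL2, if_neg (fun h => hL2pos.ne (h.1 : (0:ℝ) = L2)),
      if_neg (fun h => hL2pos.ne (h.1 : (0:ℝ) = L2))]
  have tvW10 : tieval B v (1 - s) 0 L1 = 0 := by
    unfold NashAux.tieval
    have hlt : min (B (1 - s)) (v (1 - s) 0) < min (B (1 - (1 - s))) (v (1 - (1 - s)) 0) := by
      rw [hL1min, hss]
      exact lt_min (lt_of_le_of_lt hL1Bw hs) hvs1
    rw [if_neg (fun h => absurd h.2 (not_lt.mpr hlt.le)), if_pos ⟨hL1, hlt⟩]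
  -- dirac integrals
  have diracW1 : ∀ (j : Fin 2) (x : ℝ),
      ∫ q, winProb2 B v (1 - s) j x q.1 ∂(Measure.dirac ((L1, 0) : ℝ × ℝ))
        = winProb2 B v (1 - s) j x L1 := by
    intro j x
    rw [integral_dirac]
  have diracW2 : ∀ (j : Fin 2) (x : ℝ),
      ∫ q, winProb2 B v (1 - s) j x q.2 ∂(Measure.dirac ((L1, 0) : ℝ × ℝ))
        = winProb2 B v (1 - s) j x 0 := by
    intro j x
    rw [integral_dirac]
  -- player s's win probabilities against νw
  have hs1mid : ∀ x : ℝ, 0 < x → x ≤ L1 →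
      (∫ q, winProb2 B v s 0 x q.1 ∂νw) = 1 - L1 / v s 0 + x / v s 0 := by
    intro x hx0 hx1
    rw [hvw, integral_two_mix _ _ hn0 hn1 (measq1 s 0 x) (bnd1 s 0 x),
      winProb_unifSeg_fst', winProb_unifSeg_fst',
      stepInt_const, stepInt_mid (tieval B v s 0 x) hL1pos hx0.le hx1, if_pos hx0, hmassW]
    field_simp
    ring
  have hs1zero : (∫ q, winProb2 B v s 0 0 q.1 ∂νw) = (1 - L1 / v s 0) / 2 := by
    rw [hvw, integral_two_mix _ _ hn0 hn1 (measq1 s 0 0) (bnd1 s 0 0),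
      winProb_unifSeg_fst', winProb_unifSeg_fst',
      stepInt_const, stepInt_lo (tieval B v s 0 0) hL1pos (le_refl 0),
      if_neg (lt_irrefl (0:ℝ)), if_neg (lt_irrefl (0:ℝ)), tvS10, hmassW]
    ring
  have hs1hi : ∀ x : ℝ, L1 < x → (∫ q, winProb2 B v s 0 x q.1 ∂νw) = 1 := by
    intro x hx
    rw [hvw, integral_two_mix _ _ hn0 hn1 (measq1 s 0 x) (bnd1 s 0 x),
      winProb_unifSeg_fst', winProb_unifSeg_fst',
      stepInt_const, stepInt_hi (tieval B v s 0 x) hL1pos hx.le,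
      if_pos (lt_trans hL1pos hx)]
    linarith [hsumW]
  have hs2le : ∀ y : ℝ, 0 ≤ y → y ≤ L2 → (∫ q, winProb2 B v s 1 y q.2 ∂νw) = y / L2 := by
    intro y hy0 hy1
    rcases le_or_gt y T4 with hc | hc
    · rw [hvw, integral_two_mix _ _ hn0 hn1 (measq2 s 1 y) (bnd2 s 1 y),
        winProb_unifSeg_snd', winProb_unifSeg_snd',
        stepInt_lo (tieval B v s 1 y) hT4lt hc,
        stepInt_mid' (tieval B v s 1 y) hT4pos' hy0 hc, hn1T4]
      field_simp
      ring
    · rw [hvw, integral_two_mix _ _ hn0 hn1 (measq2 s 1 y) (bnd2 s 1 y),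
        winProb_unifSeg_snd', winProb_unifSeg_snd',
        stepInt_mid (tieval B v s 1 y) hT4lt hc.le hy1,
        stepInt_hi' (tieval B v s 1 y) hT4pos' hc.le, hvs2, hn1T4]
      have hL2T4ne : L2 - T4 ≠ 0 := sub_ne_zero.mpr (ne_of_gt hT4lt)
      field_simp
      ring
  have hs2hi : ∀ y : ℝ, L2 < y → (∫ q, winProb2 B v s 1 y q.2 ∂νw) = 1 := by
    intro y hy
    rw [hvw, integral_two_mix _ _ hn0 hn1 (measq2 s 1 y) (bnd2 s 1 y),
      winProb_unifSeg_snd', winProb_unifSeg_snd',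
      stepInt_hi (tieval B v s 1 y) hT4lt hy.le,
      stepInt_hi' (tieval B v s 1 y) hT4pos' (le_trans hT4lt.le hy.le)]
    linarith [hsumW]
  -- player w's win probabilities against νs
  have hw1lo : ∀ x : ℝ, 0 ≤ x → x < L1 →
      (∫ q, winProb2 B v (1 - s) 0 x q.1 ∂νs) = x / v (1 - s) 0 := by
    intro x hx0 hx1
    rw [hvs, integral_three_mix _ _ _ hm0 hm1 hm2 (measq1 (1 - s) 0 x) (bnd1 (1 - s) 0 x),
      diracW1, winProb_unifSeg_fst', winProb_unifSeg_fst',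
      stepInt_const, stepInt_mid (tieval B v (1 - s) 0 x) hL1pos hx0 hx1.le,
      winProb2_eq, if_neg (not_lt.mpr hx1.le), if_pos hx1]
    field_simp
    ring
  have hw1eq : (∫ q, winProb2 B v (1 - s) 0 L1 q.1 ∂νs) = L1 / v (1 - s) 0 := by
    rw [hvs, integral_three_mix _ _ _ hm0 hm1 hm2 (measq1 (1 - s) 0 L1) (bnd1 (1 - s) 0 L1),
      diracW1, winProb_unifSeg_fst', winProb_unifSeg_fst',
      stepInt_const, stepInt_hi (tieval B v (1 - s) 0 L1) hL1pos (le_refl L1),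
      winProb2_eq, if_neg (lt_irrefl L1), if_neg (lt_irrefl L1), tvW10]
    ring
  have hw1hi : ∀ x : ℝ, L1 < x → (∫ q, winProb2 B v (1 - s) 0 x q.1 ∂νs) = 1 := by
    intro x hx
    rw [hvs, integral_three_mix _ _ _ hm0 hm1 hm2 (measq1 (1 - s) 0 x) (bnd1 (1 - s) 0 x),
      diracW1, winProb_unifSeg_fst', winProb_unifSeg_fst',
      stepInt_const, stepInt_hi (tieval B v (1 - s) 0 x) hL1pos hx.le,
      winProb2_eq, if_pos hx]
    linarith [hsumS]
  have hw2zero : (∫ q, winProb2 B v (1 - s) 1 0 q.2 ∂νs) = (1 - L2 / v (1 - s) 1) / 2 := by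
    rw [hvs, integral_three_mix _ _ _ hm0 hm1 hm2 (measq2 (1 - s) 1 0) (bnd2 (1 - s) 1 0),
      diracW2, winProb2_eq, if_neg (lt_irrefl (0:ℝ)), if_neg (lt_irrefl (0:ℝ)), tvW20,
      winProb_unifSeg_snd', winProb_unifSeg_snd',
      stepInt_lo' (tieval B v (1 - s) 1 0) hT2lt hT2pos]
    rcases hT2pos.eq_or_lt with hz | hz
    · rw [← hz]
      norm_num
      ring
    · rw [stepInt_lo (tieval B v (1 - s) 1 0) hz (le_refl 0)]
      ring
  have hw2lo : ∀ y : ℝ, 0 < y → y ≤ T2 →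
      (∫ q, winProb2 B v (1 - s) 1 y q.2 ∂νs) = 1 - L2 / v (1 - s) 1 + y / v (1 - s) 1 := by
    intro y hy0 hy1
    have hT2p : 0 < T2 := lt_of_lt_of_le hy0 hy1
    rw [hvs, integral_three_mix _ _ _ hm0 hm1 hm2 (measq2 (1 - s) 1 y) (bnd2 (1 - s) 1 y),
      diracW2, winProb2_eq, if_pos hy0,
      winProb_unifSeg_snd', winProb_unifSeg_snd',
      stepInt_mid (tieval B v (1 - s) 1 y) hT2p hy0.le hy1,
      stepInt_lo' (tieval B v (1 - s) 1 y) hT2lt hy1]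
    have hT2ne : T2 ≠ 0 := hT2p.ne'
    field_simp
    ring
  have hw2mid : ∀ y : ℝ, 0 < y → T2 ≤ y → y ≤ L2 →
      (∫ q, winProb2 B v (1 - s) 1 y q.2 ∂νs) = 1 - L2 / v (1 - s) 1 + y / v (1 - s) 1 := by
    intro y hy0 hy1 hy2
    rw [hvs, integral_three_mix _ _ _ hm0 hm1 hm2 (measq2 (1 - s) 1 y) (bnd2 (1 - s) 1 y),
      diracW2, winProb2_eq, if_pos hy0,
      winProb_unifSeg_snd', winProb_unifSeg_snd',
      stepInt_mid' (tieval B v (1 - s) 1 y) hT2lt hy1 hy2]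
    rcases hT2pos.eq_or_lt with hz | hz
    · rw [← hz] at hmassS ⊢
      rw [stepInt_const]
      norm_num
      rw [hmassS]
      field_simp
      ring
    · rw [stepInt_hi (tieval B v (1 - s) 1 y) hz hy1, hmassS]
      field_simp
      ring
  have hw2hi : ∀ y : ℝ, L2 < y → (∫ q, winProb2 B v (1 - s) 1 y q.2 ∂νs) = 1 := by
    intro y hy
    have hy0 : (0:ℝ) < y := lt_trans hL2pos hy
    rw [hvs, integral_three_mix _ _ _ hm0 hm1 hm2 (measq2 (1 - s) 1 y) (bnd2 (1 - s) 1 y),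
      diracW2, winProb2_eq, if_pos hy0,
      winProb_unifSeg_snd', winProb_unifSeg_snd',
      stepInt_hi' (tieval B v (1 - s) 1 y) hT2lt hy.le]
    rcases hT2pos.eq_or_lt with hz | hz
    · rw [← hz] at hsumS ⊢
      rw [stepInt_const, if_pos hy0]
      norm_num at hsumS ⊢
      linarith [hsumS]
    · rw [stepInt_hi (tieval B v (1 - s) 1 y) hz (by linarith [hT2lt] : T2 ≤ y)]
      linarith [hsumS]
  -- payoff bounds and values
  have boundS : ∀ p : ℝ × ℝ, 0 ≤ p.1 → 0 ≤ p.2 →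
      (∫ q, payoff2 B v s p q ∂νw) ≤ v s 0 - L1 := by
    intro p hp1 hp2
    rw [payoff_split B v s p νw]
    have h2 : (∫ q, winProb2 B v s 1 p.2 q.2 ∂νw) * v s 1 - p.2 ≤ 0 := by
      rcases le_or_gt p.2 L2 with hc | hc
      · rw [hs2le p.2 hp2 hc, hvs2, div_mul_cancel₀ _ hL2ne]
        linarith
      · rw [hs2hi p.2 hc, one_mul, hvs2]
        linarith
    have h1 : (∫ q, winProb2 B v s 0 p.1 q.1 ∂νw) * v s 0 - p.1 ≤ v s 0 - L1 := by
      rcases hp1.eq_or_lt with he | hpos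
      · rw [← he, hs1zero]
        have he2 : (1 - L1 / v s 0) / 2 * v s 0 = (v s 0 - L1) / 2 := by
          field_simp
        rw [he2]
        linarith
      · rcases le_or_gt p.1 L1 with hc | hc
        · rw [hs1mid p.1 hpos hc]
          have he2 : (1 - L1 / v s 0 + p.1 / v s 0) * v s 0 = v s 0 - L1 + p.1 := by
            field_simp
          rw [he2]
          linarith
        · rw [hs1hi p.1 hc, one_mul]
          linarith
    linarith
  have eqS : ∀ p : ℝ × ℝ, 0 < p.1 → p.1 ≤ L1 → 0 ≤ p.2 → p.2 ≤ L2 →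
      (∫ q, payoff2 B v s p q ∂νw) = v s 0 - L1 := by
    intro p h1 h2 h3 h4
    rw [payoff_split B v s p νw, hs1mid p.1 h1 h2, hs2le p.2 h3 h4, hvs2,
      div_mul_cancel₀ _ hL2ne]
    have he2 : (1 - L1 / v s 0 + p.1 / v s 0) * v s 0 = v s 0 - L1 + p.1 := by
      field_simp
    rw [he2]
    ring
  have boundW : ∀ p : ℝ × ℝ, 0 ≤ p.1 → 0 ≤ p.2 → p.1 + p.2 ≤ B (1 - s) →
      (∫ q, payoff2 B v (1 - s) p q ∂νs) ≤ v (1 - s) 1 - L2 := by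
    intro p hp1 hp2 hpb
    rw [payoff_split B v (1 - s) p νs]
    have h1 : (∫ q, winProb2 B v (1 - s) 0 p.1 q.1 ∂νs) * v (1 - s) 0 - p.1 ≤ 0 := by
      rcases lt_trichotomy p.1 L1 with hc | hc | hc
      · rw [hw1lo p.1 hp1 hc, div_mul_cancel₀ _ hb1ne]
        linarith
      · rw [hc, hw1eq, div_mul_cancel₀ _ hb1ne]
        linarith
      · rcases hL1cases with hL | hL
        · exfalso
          have : p.1 ≤ L1 := by rw [hL]; linarith
          linarith
        · rw [hw1hi p.1 hc, one_mul, ← hL]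
          linarith
    have h2 : (∫ q, winProb2 B v (1 - s) 1 p.2 q.2 ∂νs) * v (1 - s) 1 - p.2
        ≤ v (1 - s) 1 - L2 := by
      rcases hp2.eq_or_lt with he | hpos
      · rw [← he, hw2zero]
        have he2 : (1 - L2 / v (1 - s) 1) / 2 * v (1 - s) 1 = (v (1 - s) 1 - L2) / 2 := by
          field_simp
        rw [he2]
        linarith
      · rcases le_or_gt p.2 L2 with hc | hc
        · have hval : (∫ q, winProb2 B v (1 - s) 1 p.2 q.2 ∂νs)
              = 1 - L2 / v (1 - s) 1 + p.2 / v (1 - s) 1 := by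
            rcases le_or_gt p.2 T2 with hd | hd
            · exact hw2lo p.2 hpos hd
            · exact hw2mid p.2 hpos hd.le hc
          rw [hval]
          have he2 : (1 - L2 / v (1 - s) 1 + p.2 / v (1 - s) 1) * v (1 - s) 1
              = v (1 - s) 1 - L2 + p.2 := by
            field_simp
          rw [he2]
          linarith
        · rw [hw2hi p.2 hc, one_mul]
          linarith
    linarith
  have eqW : ∀ p : ℝ × ℝ, 0 ≤ p.1 → p.1 ≤ L1 → 0 < p.2 → p.2 ≤ L2 →
      (∫ q, payoff2 B v (1 - s) p q ∂νs) = v (1 - s) 1 - L2 := by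
    intro p h1 h2 h3 h4
    rw [payoff_split B v (1 - s) p νs]
    have e1 : (∫ q, winProb2 B v (1 - s) 0 p.1 q.1 ∂νs) * v (1 - s) 0 - p.1 = 0 := by
      rcases lt_or_eq_of_le h2 with hc | hc
      · rw [hw1lo p.1 h1 hc, div_mul_cancel₀ _ hb1ne]
        ring
      · rw [hc, hw1eq, div_mul_cancel₀ _ hb1ne]
        ring
    have hval : (∫ q, winProb2 B v (1 - s) 1 p.2 q.2 ∂νs)
        = 1 - L2 / v (1 - s) 1 + p.2 / v (1 - s) 1 := by
      rcases le_or_gt p.2 T2 with hd | hd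
      · exact hw2lo p.2 h3 hd
      · exact hw2mid p.2 h3 hd.le h4
    have he2 : (1 - L2 / v (1 - s) 1 + p.2 / v (1 - s) 1) * v (1 - s) 1
        = v (1 - s) 1 - L2 + p.2 := by
      field_simp
    rw [e1, hval, he2]
    ring
  -- the equilibrium strategies concentrate on the "good" sets
  have hGoodS : νs ((Ioc (0:ℝ) L1 ×ˢ Icc (0:ℝ) L2)ᶜ : Set (ℝ × ℝ)) = 0 := by
    have hN : MeasurableSet ((Ioc (0:ℝ) L1 ×ˢ Icc (0:ℝ) L2)ᶜ : Set (ℝ × ℝ)) :=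
      (measurableSet_Ioc.prod measurableSet_Icc).compl
    rw [hvs, mix3_apply, Measure.dirac_apply' _ hN,
      indicator_of_notMem (by
        simp only [mem_compl_iff, not_not, mem_prod, mem_Ioc, mem_Icc]
        exact ⟨⟨hL1pos, le_refl L1⟩, le_refl 0, hL2pos.le⟩),
      unifSeg_apply _ _ hN, unifSeg_apply _ _ hN]
    have e1 : {t : ℝ | ((1 - t) * (L1, (0:ℝ)).1 + t * ((L1, T2) : ℝ × ℝ).1,
        (1 - t) * (L1, (0:ℝ)).2 + t * ((L1, T2) : ℝ × ℝ).2)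
          ∈ ((Ioc (0:ℝ) L1 ×ˢ Icc (0:ℝ) L2)ᶜ : Set (ℝ × ℝ))} ∩ Icc (0:ℝ) 1 = ∅ := by
      rw [eq_empty_iff_forall_notMem]
      rintro t ⟨htN, ht0, ht1⟩
      apply htN
      simp only [mem_prod, mem_Ioc, mem_Icc]
      have r1 : (1 - t) * L1 + t * L1 = L1 := by ring
      have r2 : (1 - t) * (0:ℝ) + t * T2 = t * T2 := by ring
      have r3 : 0 ≤ t * T2 := mul_nonneg ht0 hT2pos
      have r4 : t * T2 ≤ T2 := mul_le_of_le_one_left hT2pos ht1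
      exact ⟨⟨by rw [r1]; exact hL1pos, by rw [r1]⟩, by rw [r2]; exact r3,
        by rw [r2]; linarith⟩
    have e2 : volume ({t : ℝ | ((1 - t) * ((0:ℝ), L2).1 + t * ((L1, T2) : ℝ × ℝ).1,
        (1 - t) * ((0:ℝ), L2).2 + t * ((L1, T2) : ℝ × ℝ).2)
          ∈ ((Ioc (0:ℝ) L1 ×ˢ Icc (0:ℝ) L2)ᶜ : Set (ℝ × ℝ))} ∩ Icc (0:ℝ) 1) = 0 := by
      apply measure_mono_null (t := {(0:ℝ)}) _ (measure_singleton 0)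
      rintro t ⟨htN, ht0, ht1⟩
      simp only [mem_singleton_iff]
      by_contra htne
      have htpos : 0 < t := lt_of_le_of_ne ht0 (Ne.symm htne)
      apply htN
      simp only [mem_prod, mem_Ioc, mem_Icc]
      have r1 : (1 - t) * (0:ℝ) + t * L1 = t * L1 := by ring
      have r2 : 0 < t * L1 := mul_pos htpos hL1pos
      have r3 : t * L1 ≤ L1 := mul_le_of_le_one_left hL1pos.le ht1
      have r4 : 0 ≤ (1 - t) * L2 := mul_nonneg (by linarith) hL2pos.le
      have r5 : 0 ≤ t * T2 := mul_nonneg ht0 hT2pos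
      have r6 : t * T2 ≤ t * L2 := mul_le_mul_of_nonneg_left hT2lt.le ht0
      have r7 : (1 - t) * L2 + t * L2 = L2 := by ring
      exact ⟨⟨by rw [r1]; exact r2, by rw [r1]; exact r3⟩, by linarith, by linarith⟩
    rw [e1, e2]
    simp
  have hGoodW : νw ((Icc (0:ℝ) L1 ×ˢ Ioc (0:ℝ) L2)ᶜ : Set (ℝ × ℝ)) = 0 := by
    have hN : MeasurableSet ((Icc (0:ℝ) L1 ×ˢ Ioc (0:ℝ) L2)ᶜ : Set (ℝ × ℝ)) :=
      (measurableSet_Icc.prod measurableSet_Ioc).compl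
    rw [hvw, mix2_apply, unifSeg_apply _ _ hN, unifSeg_apply _ _ hN]
    have e1 : {t : ℝ | ((1 - t) * ((0:ℝ), T4).1 + t * (((0:ℝ), L2) : ℝ × ℝ).1,
        (1 - t) * ((0:ℝ), T4).2 + t * (((0:ℝ), L2) : ℝ × ℝ).2)
          ∈ ((Icc (0:ℝ) L1 ×ˢ Ioc (0:ℝ) L2)ᶜ : Set (ℝ × ℝ))} ∩ Icc (0:ℝ) 1 = ∅ := by
      rw [eq_empty_iff_forall_notMem]
      rintro t ⟨htN, ht0, ht1⟩
      apply htN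
      simp only [mem_prod, mem_Ioc, mem_Icc]
      have r1 : (1 - t) * (0:ℝ) + t * 0 = 0 := by ring
      have r2 : t * T4 ≤ t * L2 := mul_le_mul_of_nonneg_left hT4lt.le ht0
      have r3 : (1 - t) * T4 ≤ (1 - t) * L2 := mul_le_mul_of_nonneg_left hT4lt.le (by linarith)
      have r4 : (1 - t) * T4 + t * T4 = T4 := by ring
      have r5 : (1 - t) * L2 + t * L2 = L2 := by ring
      exact ⟨⟨by rw [r1], by rw [r1]; exact hL1pos.le⟩, by linarith, by linarith⟩
    have e2 : volume ({t : ℝ | ((1 - t) * ((0:ℝ), T4).1 + t * ((L1, (0:ℝ)) : ℝ × ℝ).1,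
        (1 - t) * ((0:ℝ), T4).2 + t * ((L1, (0:ℝ)) : ℝ × ℝ).2)
          ∈ ((Icc (0:ℝ) L1 ×ˢ Ioc (0:ℝ) L2)ᶜ : Set (ℝ × ℝ))} ∩ Icc (0:ℝ) 1) = 0 := by
      apply measure_mono_null (t := {(1:ℝ)}) _ (measure_singleton 1)
      rintro t ⟨htN, ht0, ht1⟩
      simp only [mem_singleton_iff]
      by_contra htne
      have htlt : t < 1 := lt_of_le_of_ne ht1 htne
      apply htN
      simp only [mem_prod, mem_Ioc, mem_Icc]
      have r1 : 0 ≤ t * L1 := mul_nonneg ht0 hL1pos.le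
      have r2 : t * L1 ≤ L1 := mul_le_of_le_one_left hL1pos.le ht1
      have r3 : 0 < (1 - t) * T4 := mul_pos (by linarith) hT4pos'
      have r4 : (1 - t) * T4 ≤ T4 := mul_le_of_le_one_left hT4pos'.le (by linarith)
      have r5 : (1 - t) * T4 + t * 0 = (1 - t) * T4 := by ring
      exact ⟨⟨by linarith, by linarith⟩, by rw [r5]; exact r3, by rw [r5]; linarith⟩
    rw [e1, e2]
    simp
  -- equilibrium expected utilities
  have expS : expUtil2 B v s νs νw = v s 0 - L1 := by
    unfold expUtil2
    have hae : ∀ᵐ p ∂νs, (∫ q, payoff2 B v s p q ∂νw) = v s 0 - L1 := by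
      rw [ae_iff]
      apply measure_mono_null _ hGoodS
      intro p hp
      simp only [mem_setOf_eq] at hp
      simp only [mem_compl_iff, mem_prod, mem_Ioc, mem_Icc]
      intro hpG
      exact hp (eqS p hpG.1.1 hpG.1.2 hpG.2.1 hpG.2.2)
    rw [integral_congr_ae hae, integral_const]
    simp
  have expW : expUtil2 B v (1 - s) νw νs = v (1 - s) 1 - L2 := by
    unfold expUtil2
    have hae : ∀ᵐ p ∂νw, (∫ q, payoff2 B v (1 - s) p q ∂νs) = v (1 - s) 1 - L2 := by
      rw [ae_iff]
      apply measure_mono_null _ hGoodW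
      intro p hp
      simp only [mem_setOf_eq] at hp
      simp only [mem_compl_iff, mem_prod, mem_Ioc, mem_Icc]
      intro hpG
      exact hp (eqW p hpG.1.1 hpG.1.2 hpG.2.1 hpG.2.2)
    rw [integral_congr_ae hae, integral_const]
    simp
  -- any strategy gets at most the bound
  have expLe : ∀ (i : Fin 2) (c : ℝ) (ν : Measure (ℝ × ℝ)), IsProbabilityMeasure ν →
      ∀ μ : Measure (ℝ × ℝ), IsStrategy2 (B i) μ →
      (∀ p : ℝ × ℝ, p ∈ Feas (B i) → (∫ q, payoff2 B v i p q ∂ν) ≤ c) →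
      expUtil2 B v i μ ν ≤ c := by
    intro i c ν instν μ hμ hle
    haveI := instν
    haveI := hμ.1
    unfold expUtil2
    have hmeasI : StronglyMeasurable (fun p : ℝ × ℝ => ∫ q, payoff2 B v i p q ∂ν) :=
      (measurable_payoff2_pair B v i).stronglyMeasurable.integral_prod_right'
    have haeF : ∀ᵐ p ∂μ, p ∈ Feas (B i) := by
      rw [ae_iff]
      have hc : {p : ℝ × ℝ | ¬ p ∈ Feas (B i)} = (Feas (B i))ᶜ := rfl
      rw [hc, measure_compl (measurableSet_Feas _) (measure_ne_top μ _), hμ.2, measure_univ]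
      simp
    have hInt : Integrable (fun p : ℝ × ℝ => ∫ q, payoff2 B v i p q ∂ν) μ := by
      apply Integrable.mono' (integrable_const (|v i 0| + |v i 1| + B i + B i))
        hmeasI.aestronglyMeasurable
      filter_upwards [haeF] with p hp
      have h1 : ‖∫ q, payoff2 B v i p q ∂ν‖ ≤ |v i 0| + |v i 1| + |p.1| + |p.2| := by
        have h2 := norm_integral_le_of_norm_le_const (μ := ν)
          (C := |v i 0| + |v i 1| + |p.1| + |p.2|) (f := fun q => payoff2 B v i p q)
          (Filter.Eventually.of_forall (fun q => by simpa using abs_payoff2_le B v i p q))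
        simpa [measure_univ] using h2
      have h3 : |p.1| ≤ B i := by
        rw [abs_of_nonneg hp.1]
        linarith [hp.2.1, hp.2.2]
      have h4 : |p.2| ≤ B i := by
        rw [abs_of_nonneg hp.2.1]
        linarith [hp.1, hp.2.2]
      calc ‖∫ q, payoff2 B v i p q ∂ν‖ ≤ |v i 0| + |v i 1| + |p.1| + |p.2| := h1
        _ ≤ |v i 0| + |v i 1| + B i + B i := by linarith
    calc ∫ p, (∫ q, payoff2 B v i p q ∂ν) ∂μ ≤ ∫ _, c ∂μ := by
          apply integral_mono_ae hInt (integrable_const c)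
          filter_upwards [haeF] with p hp
          exact hle p hp
      _ = c := by simp
  -- final assembly
  have hF1 : (1 - L2 / v (1 - s) 1) = (1 - L2 / v (1 - s) 1) := rfl
  constructor
  · intro k
    by_cases hk : k = s
    · rw [hk]
      simpa using hstratS
    · rw [hkform k hk]
      simpa [hsw] using hstratW
  · intro i μ hμ
    rcases eq_or_ne i s with hi | hi
    · have hFs : (fun k => if k = s then νs else νw) s = νs := by simp
      have hFw : (fun k => if k = s then νs else νw) (1 - s) = νw := by simp [hsw]
      rw [hi, hFw, hFs]
      calc expUtil2 B v s μ νw ≤ v s 0 - L1 :=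
            expLe s _ νw instW μ (hi ▸ hμ) (fun p hp => boundS p hp.1 hp.2.1)
        _ = expUtil2 B v s νs νw := expS.symm
    · have hi' := hkform i hi
      have hFs : (fun k => if k = s then νs else νw) s = νs := by simp
      have hFw : (fun k => if k = s then νs else νw) (1 - s) = νw := by simp [hsw]
      rw [hi', hss, hFs, hFw]
      calc expUtil2 B v (1 - s) μ νs ≤ v (1 - s) 1 - L2 :=
            expLe (1 - s) _ νs instS μ (hi' ▸ hμ) (fun p hp => boundW p hp.1 hp.2.1 hp.2.2)
        _ = expUtil2 B v (1 - s) νw νs := expW.symm
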